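/- Let S(z) be the formal power series solution of S(z) - log(1 + S(z)) = z - log(1+z) with S(z) ≠ z. Then S is an involution, S(S(z)) = z, and its expansion begins S(z) = -z + (2/3)z^2 - (4/9)z^3 + (44/135)z^4 - (104/405)z^5 + O(z^6). -/

import Mathlib

open PowerSeries

/-- For a formal power series `S` with zero constant term, the formal composition
`S - log(1 + S) = Σ_{m≥2} (-1)^m S^m / m`.  (Only `m ≤ n` contribute to the `n`-th
coefficient since `S` has positive order.) -/
noncomputable def zLogSeries (S : PowerSeries ℚ) : PowerSeries ℚ :=
  PowerSeries.mk fun n => ∑ m ∈ Finset.Icc 2 n, (-1 : ℚ) ^ m * (m : ℚ)⁻¹ * coeff n (S ^ m)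

/-- Formal composition `A ∘ B` of power series (meaningful when `B` has zero
constant term). -/
noncomputable def psComp (A B : PowerSeries ℚ) : PowerSeries ℚ :=
  PowerSeries.mk fun n => ∑ m ∈ Finset.range (n + 1), coeff m A * coeff n (B ^ m)

/- ### Auxiliary lemmas -/

lemma pow_coeff_zero {B : PowerSeries ℚ} (hB : constantCoeff B = 0)
    {n m : ℕ} (h : n < m) : coeff n (B ^ m) = 0 := by
  have : (X : PowerSeries ℚ) ^ m ∣ B ^ m := pow_dvd_pow_of_dvd (X_dvd_iff.mpr hB) m
  exact X_pow_dvd_iff.mp this n h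

lemma sub_pow_dvd {f g : PowerSeries ℚ} (hf : constantCoeff f = 0)
    (hg : constantCoeff g = 0) {n : ℕ}
    (hlow : ∀ k < n, coeff k f = coeff k g) (m : ℕ) (hm : 1 ≤ m) :
    (X : PowerSeries ℚ) ^ (n + m - 1) ∣ f ^ m - g ^ m := by
  induction m with
  | zero => omega
  | succ m ih =>
    rcases Nat.eq_or_lt_of_le hm with h1 | h1
    · simp only [← h1, pow_one]
      exact X_pow_dvd_iff.mpr (by simpa [sub_eq_zero] using fun k hk => hlow k (by omega))
    · have hm' : 1 ≤ m := by omega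
      have key : f ^ (m+1) - g ^ (m+1) = f * (f ^ m - g ^ m) + (f - g) * g ^ m := by ring
      rw [key]
      have h2 : (X : PowerSeries ℚ) ^ (n + (m+1) - 1) ∣ f * (f ^ m - g ^ m) := by
        have : n + (m+1) - 1 = 1 + (n + m - 1) := by omega
        rw [this, pow_add, pow_one]
        exact mul_dvd_mul (X_dvd_iff.mpr hf) (ih hm')
      have h3 : (X : PowerSeries ℚ) ^ (n + (m+1) - 1) ∣ (f - g) * g ^ m := by
        have : n + (m+1) - 1 = n + m := by omega
        rw [this, pow_add]
        refine mul_dvd_mul ?_ (pow_dvd_pow_of_dvd (X_dvd_iff.mpr hg) m)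
        exact X_pow_dvd_iff.mpr (by simpa [sub_eq_zero] using fun k hk => hlow k hk)
      exact dvd_add h2 h3

/-- KEY: the (n+1)-st coefficient of zLogSeries is linear in the n-th coefficient. -/
lemma zLog_key {f g : PowerSeries ℚ} (hf : constantCoeff f = 0)
    (hg : constantCoeff g = 0) {n : ℕ} (hn : 2 ≤ n)
    (hlow : ∀ k < n, coeff k f = coeff k g) :
    coeff (n+1) (zLogSeries f) - coeff (n+1) (zLogSeries g)
      = coeff 1 f * (coeff n f - coeff n g) := by
  have hdiff : ∀ m ∈ Finset.Icc 2 (n+1),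
      (-1 : ℚ) ^ m * (m : ℚ)⁻¹ * coeff (n+1) (f ^ m)
        - (-1 : ℚ) ^ m * (m : ℚ)⁻¹ * coeff (n+1) (g ^ m)
      = if m = 2 then coeff 1 f * (coeff n f - coeff n g) else 0 := by
    intro m hm
    simp only [Finset.mem_Icc] at hm
    rcases eq_or_ne m 2 with rfl | hm2
    · simp only [if_pos rfl]
      have h2 : f ^ 2 - g ^ 2 = (f - g) * (f + g) := by ring
      have : coeff (n+1) (f ^ 2) - coeff (n+1) (g ^ 2)
          = coeff (n+1) ((f - g) * (f + g)) := by rw [← h2, map_sub]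
      rw [← mul_sub, this, coeff_mul]
      rw [Finset.sum_eq_single (n, 1)]
      · have h1 : coeff 1 f = coeff 1 g := hlow 1 (by omega)
        simp [map_sub, ← h1]
        ring
      · rintro ⟨p, q⟩ hb hne
        simp only [Finset.HasAntidiagonal.mem_antidiagonal] at hb
        rcases lt_or_ge p n with hp | hp
        · simp [map_sub, hlow p hp]
        · have hq : q = 0 := by
            by_contra hq0
            exact hne (by simp only [Prod.mk.injEq]; omega)
          subst hq
          simp [coeff_zero_eq_constantCoeff, hf, hg]
      · intro h
        exact absurd (by simp [Finset.HasAntidiagonal.mem_antidiagonal]) h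
    · rw [if_neg hm2, ← mul_sub]
      have hm3 : 3 ≤ m := by omega
      have hd := sub_pow_dvd hf hg hlow m (by omega)
      have : coeff (n+1) (f ^ m - g ^ m) = 0 :=
        X_pow_dvd_iff.mp hd (n+1) (by omega)
      rw [map_sub] at this
      rw [sub_eq_zero.mp this]
      ring
  simp only [zLogSeries, coeff_mk, ← Finset.sum_sub_distrib]
  rw [Finset.sum_congr rfl hdiff, Finset.sum_ite_eq' (Finset.Icc 2 (n+1)) 2]
  simp [Finset.mem_Icc]; omega

/- ### The deck transformation -/

noncomputable def sCoef : ℕ → ℚ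
  | 0 => 0
  | 1 => -1
  | n + 2 =>
    (∑ m ∈ Finset.Icc 2 (n + 3),
        (-1 : ℚ) ^ m * (m : ℚ)⁻¹ *
          coeff (n + 3) ((PowerSeries.mk fun k => if h : k < n + 2 then sCoef k else 0) ^ m))
      - (-1 : ℚ) ^ (n + 3) * ((n + 3 : ℕ) : ℚ)⁻¹
  decreasing_by exact h

noncomputable def Sdeck : PowerSeries ℚ := PowerSeries.mk sCoef

lemma Sdeck_coeff (n : ℕ) : coeff n Sdeck = sCoef n := coeff_mk n _

lemma Sdeck_const : constantCoeff Sdeck = 0 := by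
  rw [← coeff_zero_eq_constantCoeff_apply, Sdeck_coeff, sCoef]

lemma Sdeck_one : coeff 1 Sdeck = -1 := by rw [Sdeck_coeff, sCoef]

lemma zLogX_coeff (N : ℕ) :
    coeff N (zLogSeries X) = if 2 ≤ N then (-1 : ℚ) ^ N * (N : ℚ)⁻¹ else 0 := by
  simp only [zLogSeries, coeff_mk, coeff_X_pow]
  rcases le_or_gt 2 N with h | h
  · rw [if_pos h, Finset.sum_eq_single_of_mem N (by simp [Finset.mem_Icc]; omega)]
    · simp
    · intro m _ hne; simp [hne.symm]
  · rw [if_neg (by omega)]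
    have : Finset.Icc 2 N = ∅ := by
      apply Finset.Icc_eq_empty; omega
    simp [this]

lemma Sdeck_solves : zLogSeries Sdeck = zLogSeries X := by
  ext N
  rw [zLogX_coeff]
  match N with
  | 0 => simp [zLogSeries]
  | 1 => simp [zLogSeries, Finset.Icc_eq_empty_of_lt]
  | 2 =>
    rw [if_pos (by norm_num)]
    simp only [zLogSeries, coeff_mk, Finset.Icc_self, Finset.sum_singleton]
    have : coeff 2 (Sdeck ^ 2) = 1 := by
      rw [pow_two, coeff_mul, Finset.Nat.sum_antidiagonal_eq_sum_range_succ_mk]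
      simp [Finset.sum_range_succ, Sdeck_coeff, sCoef]
    rw [this]; norm_num
  | (n + 3) =>
    rw [if_pos (by omega)]
    set T : PowerSeries ℚ := PowerSeries.mk fun k => if h : k < n + 2 then sCoef k else 0 with hT
    have hTc : ∀ k, coeff k T = if k < n + 2 then sCoef k else 0 := by
      intro k; rw [hT, coeff_mk]; split <;> simp_all
    have hT0 : constantCoeff T = 0 := by
      rw [← coeff_zero_eq_constantCoeff_apply, hTc]; simp [sCoef]
    have hlow : ∀ k < n + 2, coeff k Sdeck = coeff k T := by
      intro k hk; rw [Sdeck_coeff, hTc, if_pos hk]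
    have hkey := zLog_key Sdeck_const hT0 (by omega : 2 ≤ n + 2) hlow
    have hTn : coeff (n+2) T = 0 := by rw [hTc]; simp
    have hdef : sCoef (n + 2)
        = coeff (n+3) (zLogSeries T) - (-1 : ℚ) ^ (n + 3) * ((n + 3 : ℕ) : ℚ)⁻¹ := by
      rw [show sCoef (n+2) = _ from sCoef.eq_3 n]
      simp only [zLogSeries, coeff_mk, hT]
    have : coeff (n+3) (zLogSeries Sdeck)
        = coeff (n+3) (zLogSeries T) + (-1) * (sCoef (n+2) - 0) := by
      rw [← hTn, ← Sdeck_one, ← Sdeck_coeff (n+2)]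
      linarith [hkey]
    rw [this, hdef]
    push_cast
    ring

/- ### Uniqueness -/

lemma sol_sq {f : PowerSeries ℚ} (h0 : constantCoeff f = 0)
    (hsol : zLogSeries f = zLogSeries X) : (coeff 1 f) ^ 2 = 1 := by
  have h2 := congrArg (coeff 2) hsol
  rw [zLogX_coeff] at h2
  simp only [zLogSeries, coeff_mk, Finset.Icc_self, Finset.sum_singleton] at h2
  rw [pow_two f, coeff_mul, Finset.Nat.sum_antidiagonal_eq_sum_range_succ_mk] at h2
  simp only [Finset.sum_range_succ, Finset.sum_range_zero] at h2
  rw [coeff_zero_eq_constantCoeff, h0] at h2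
  norm_num at h2
  nlinarith [h2]

lemma sol_unique {f g : PowerSeries ℚ} (hf0 : constantCoeff f = 0)
    (hg0 : constantCoeff g = 0) (hf : zLogSeries f = zLogSeries X)
    (hg : zLogSeries g = zLogSeries X) (h1 : coeff 1 f = coeff 1 g) : f = g := by
  have hne : coeff 1 f ≠ 0 := by
    intro h; have := sol_sq hf0 hf; rw [h] at this; norm_num at this
  ext n
  induction n using Nat.strong_induction_on with
  | _ n ih =>
    match n with
    | 0 => rw [coeff_zero_eq_constantCoeff, hf0, hg0]
    | 1 => exact h1
    | (k + 2) =>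
      have hlow : ∀ j < k + 2, coeff j f = coeff j g := fun j hj => ih j hj
      have hkey := zLog_key hf0 hg0 (by omega : 2 ≤ k + 2) hlow
      rw [hf, hg, sub_self] at hkey
      have := (mul_eq_zero.mp hkey.symm).resolve_left hne
      linarith [this]

/- ### Composition machinery -/

noncomputable def Epoly (A B : PowerSeries ℚ) (n : ℕ) : PowerSeries ℚ :=
  ∑ m ∈ Finset.range (n + 1), C (coeff m A) * B ^ m

lemma Epoly_coeff (A B : PowerSeries ℚ) (n p : ℕ) :
    coeff p (Epoly A B n) = ∑ m ∈ Finset.range (n + 1), coeff m A * coeff p (B ^ m) := by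
  simp [Epoly, coeff_C_mul]

lemma psComp_coeff_eq_Epoly {B : PowerSeries ℚ} (hB : constantCoeff B = 0)
    (A : PowerSeries ℚ) {p n : ℕ} (hpn : p ≤ n) :
    coeff p (psComp A B) = coeff p (Epoly A B n) := by
  rw [Epoly_coeff, psComp, coeff_mk]
  apply Finset.sum_subset
  · intro m hm; simp only [Finset.mem_range] at *; omega
  · intro m hm hnot
    simp only [Finset.mem_range] at *
    rw [pow_coeff_zero hB (by omega), mul_zero]

lemma psComp_one (B : PowerSeries ℚ) : psComp 1 B = 1 := by
  ext n
  rw [psComp, coeff_mk, Finset.sum_eq_single 0]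
  · simp
  · intro m _ hm
    rw [coeff_one, if_neg hm, zero_mul]
  · intro h; simp at h

lemma psComp_mul {B : PowerSeries ℚ} (hB : constantCoeff B = 0) (A A' : PowerSeries ℚ) :
    psComp (A * A') B = psComp A B * psComp A' B := by
  ext n
  have hrhs : coeff n (psComp A B * psComp A' B)
      = coeff n (Epoly A B n * Epoly A' B n) := by
    rw [coeff_mul, coeff_mul]
    apply Finset.sum_congr rfl
    rintro ⟨p, q⟩ hpq
    simp only [Finset.HasAntidiagonal.mem_antidiagonal] at hpq
    rw [psComp_coeff_eq_Epoly hB A (by omega : p ≤ n),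
        psComp_coeff_eq_Epoly hB A' (by omega : q ≤ n)]
  rw [hrhs, psComp_coeff_eq_Epoly hB (A * A') (le_refl n), Epoly_coeff]
  have hexp : Epoly A B n * Epoly A' B n
      = ∑ i ∈ Finset.range (n+1), ∑ j ∈ Finset.range (n+1),
          C (coeff i A * coeff j A') * B ^ (i + j) := by
    rw [Epoly, Epoly, Finset.sum_mul_sum]
    apply Finset.sum_congr rfl; intro i _
    apply Finset.sum_congr rfl; intro j _
    rw [map_mul, pow_add]; ring
  rw [hexp]
  simp only [map_sum, coeff_C_mul]
  have hL : ∀ m ∈ Finset.range (n+1),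
      coeff m (A * A') * coeff n (B ^ m)
        = ∑ p ∈ Finset.HasAntidiagonal.antidiagonal m, coeff p.1 A * coeff p.2 A' * coeff n (B ^ (p.1 + p.2)) := by
    intro m _
    rw [coeff_mul, Finset.sum_mul]
    apply Finset.sum_congr rfl
    rintro ⟨i, j⟩ hij
    simp only [Finset.HasAntidiagonal.mem_antidiagonal] at hij
    rw [hij]
  rw [Finset.sum_congr rfl hL]
  rw [← Finset.sum_biUnion]
  · rw [← Finset.sum_product']
    apply Finset.sum_subset
    · intro ⟨i, j⟩ hij
      simp only [Finset.mem_biUnion, Finset.mem_range, Finset.HasAntidiagonal.mem_antidiagonal,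
        Finset.mem_product] at *
      obtain ⟨m, hm, hij'⟩ := hij
      constructor <;> omega
    · intro ⟨i, j⟩ hij hnot
      simp only [Finset.mem_biUnion, Finset.mem_range, Finset.HasAntidiagonal.mem_antidiagonal,
        Finset.mem_product] at *
      have : n < i + j := by
        by_contra h
        exact hnot ⟨i + j, by omega, rfl⟩
      rw [pow_coeff_zero hB this, mul_zero]
  · intro x hx y hy hxy
    apply Finset.disjoint_left.mpr
    intro p hp hp'
    simp only [Finset.HasAntidiagonal.mem_antidiagonal] at hp hp'
    exact hxy (by omega)

lemma psComp_pow {B : PowerSeries ℚ} (hB : constantCoeff B = 0) (A : PowerSeries ℚ) (m : ℕ) :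
    psComp (A ^ m) B = (psComp A B) ^ m := by
  induction m with
  | zero => simpa using psComp_one B
  | succ m ih => rw [pow_succ, psComp_mul hB, ih, pow_succ]

lemma zLog_psComp {A B : PowerSeries ℚ} (hA : constantCoeff A = 0)
    (hB : constantCoeff B = 0) :
    zLogSeries (psComp A B) = psComp (zLogSeries A) B := by
  ext N
  have hR : coeff N (psComp (zLogSeries A) B)
      = ∑ k ∈ Finset.range (N + 1),
          (∑ m ∈ Finset.Icc 2 k, (-1 : ℚ) ^ m * (m : ℚ)⁻¹ * coeff k (A ^ m))
            * coeff N (B ^ k) := by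
    rw [psComp, coeff_mk]
    exact Finset.sum_congr rfl fun k _ => by rw [zLogSeries, coeff_mk]
  have hL : coeff N (zLogSeries (psComp A B))
      = ∑ m ∈ Finset.Icc 2 N, (-1 : ℚ) ^ m * (m : ℚ)⁻¹ * coeff N ((psComp A B) ^ m) := by
    rw [zLogSeries, coeff_mk]
  rw [hL, hR]
  have h1 : ∀ m ∈ Finset.Icc 2 N,
      (-1 : ℚ) ^ m * (m : ℚ)⁻¹ * coeff N ((psComp A B) ^ m)
      = ∑ k ∈ Finset.range (N + 1),
          (-1 : ℚ) ^ m * (m : ℚ)⁻¹ * (coeff k (A ^ m) * coeff N (B ^ k)) := by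
    intro m _
    rw [← psComp_pow hB, psComp, coeff_mk, Finset.mul_sum]
  rw [Finset.sum_congr rfl h1, Finset.sum_comm]
  apply Finset.sum_congr rfl
  intro k hk
  simp only [Finset.mem_range] at hk
  rw [Finset.sum_mul]
  simp only [mul_assoc]
  symm
  apply Finset.sum_subset
  · intro m hm; simp only [Finset.mem_Icc] at *; omega
  · intro m hm hnot
    simp only [Finset.mem_Icc] at *
    rw [pow_coeff_zero hA (by omega : k < m)]
    ring

lemma psComp_zLogX (B : PowerSeries ℚ) : psComp (zLogSeries X) B = zLogSeries B := by
  ext n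
  have hL : coeff n (psComp (zLogSeries X) B)
      = ∑ k ∈ Finset.range (n + 1), coeff k (zLogSeries X) * coeff n (B ^ k) := by
    rw [psComp, coeff_mk]
  rw [hL]
  simp only [zLogX_coeff]
  have hR : coeff n (zLogSeries B)
      = ∑ m ∈ Finset.Icc 2 n, (-1 : ℚ) ^ m * (m : ℚ)⁻¹ * coeff n (B ^ m) := by
    rw [zLogSeries, coeff_mk]
  rw [hR]
  have hcong : ∀ k ∈ Finset.range (n + 1),
      (if 2 ≤ k then (-1 : ℚ) ^ k * (k : ℚ)⁻¹ else 0) * coeff n (B ^ k)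
      = if k ∈ Finset.Icc 2 n then (-1 : ℚ) ^ k * (k : ℚ)⁻¹ * coeff n (B ^ k) else 0 := by
    intro k hk
    simp only [Finset.mem_range] at hk
    by_cases h : 2 ≤ k
    · simp [Finset.mem_Icc, h, Nat.lt_succ_iff.mp hk]
    · simp [Finset.mem_Icc, h]
  rw [Finset.sum_congr rfl hcong, Finset.sum_ite_mem]
  congr 1
  ext k
  simp only [Finset.mem_inter, Finset.mem_range, Finset.mem_Icc]
  omega

/- ### Numerical coefficients -/

lemma hs2 : coeff 2 Sdeck = 2/3 := by
  have h := congrArg (coeff 3) Sdeck_solves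
  rw [zLogX_coeff] at h
  have p2 : Sdeck ^ 2 = Sdeck * Sdeck := by ring
  have p3 : Sdeck ^ 3 = Sdeck ^ 2 * Sdeck := by ring
  have hIcc : Finset.Icc 2 3 = {2, 3} := by decide
  simp only [zLogSeries, coeff_mk, hIcc] at h
  rw [Finset.sum_insert (by decide), Finset.sum_singleton] at h
  norm_num [p3, p2, coeff_mul, Finset.Nat.sum_antidiagonal_eq_sum_range_succ_mk,
    Finset.sum_range_succ, Finset.sum_range_zero, Sdeck_const, Sdeck_one,
    show coeff 0 Sdeck = 0 from by rw [Sdeck_coeff, sCoef]] at h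
  linarith

lemma hs3 : coeff 3 Sdeck = -4/9 := by
  have h := congrArg (coeff 4) Sdeck_solves
  rw [zLogX_coeff] at h
  have p2 : Sdeck ^ 2 = Sdeck * Sdeck := by ring
  have p3 : Sdeck ^ 3 = Sdeck ^ 2 * Sdeck := by ring
  have p4 : Sdeck ^ 4 = Sdeck ^ 3 * Sdeck := by ring
  have hIcc : Finset.Icc 2 4 = {2, 3, 4} := by decide
  simp only [zLogSeries, coeff_mk, hIcc] at h
  rw [Finset.sum_insert (by decide), Finset.sum_insert (by decide),
    Finset.sum_singleton] at h
  norm_num [p4, p3, p2, coeff_mul, Finset.Nat.sum_antidiagonal_eq_sum_range_succ_mk,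
    Finset.sum_range_succ, Finset.sum_range_zero, Sdeck_const, Sdeck_one, hs2,
    show coeff 0 Sdeck = 0 from by rw [Sdeck_coeff, sCoef]] at h
  linarith

set_option maxHeartbeats 1000000 in
lemma hs4 : coeff 4 Sdeck = 44/135 := by
  have h := congrArg (coeff 5) Sdeck_solves
  rw [zLogX_coeff] at h
  have p2 : Sdeck ^ 2 = Sdeck * Sdeck := by ring
  have p3 : Sdeck ^ 3 = Sdeck ^ 2 * Sdeck := by ring
  have p4 : Sdeck ^ 4 = Sdeck ^ 3 * Sdeck := by ring
  have p5 : Sdeck ^ 5 = Sdeck ^ 4 * Sdeck := by ring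
  have hIcc : Finset.Icc 2 5 = {2, 3, 4, 5} := by decide
  simp only [zLogSeries, coeff_mk, hIcc] at h
  rw [Finset.sum_insert (by decide), Finset.sum_insert (by decide),
    Finset.sum_insert (by decide), Finset.sum_singleton] at h
  norm_num [p5, p4, p3, p2, coeff_mul, Finset.Nat.sum_antidiagonal_eq_sum_range_succ_mk,
    Finset.sum_range_succ, Finset.sum_range_zero, Sdeck_const, Sdeck_one, hs2, hs3,
    show coeff 0 Sdeck = 0 from by rw [Sdeck_coeff, sCoef]] at h
  linarith

set_option maxHeartbeats 3000000 in
lemma hs5 : coeff 5 Sdeck = -104/405 := by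
  have h := congrArg (coeff 6) Sdeck_solves
  rw [zLogX_coeff] at h
  have p2 : Sdeck ^ 2 = Sdeck * Sdeck := by ring
  have p3 : Sdeck ^ 3 = Sdeck ^ 2 * Sdeck := by ring
  have p4 : Sdeck ^ 4 = Sdeck ^ 3 * Sdeck := by ring
  have p5 : Sdeck ^ 5 = Sdeck ^ 4 * Sdeck := by ring
  have p6 : Sdeck ^ 6 = Sdeck ^ 5 * Sdeck := by ring
  have hIcc : Finset.Icc 2 6 = {2, 3, 4, 5, 6} := by decide
  simp only [zLogSeries, coeff_mk, hIcc] at h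
  rw [Finset.sum_insert (by decide), Finset.sum_insert (by decide),
    Finset.sum_insert (by decide), Finset.sum_insert (by decide), Finset.sum_singleton] at h
  norm_num [p6, p5, p4, p3, p2, coeff_mul, Finset.Nat.sum_antidiagonal_eq_sum_range_succ_mk,
    Finset.sum_range_succ, Finset.sum_range_zero, Sdeck_const, Sdeck_one, hs2, hs3, hs4,
    show coeff 0 Sdeck = 0 from by rw [Sdeck_coeff, sCoef]] at h
  linarith

/- ### Main theorem -/

/-- The equation `S(z) - log(1 + S(z)) = z - log(1 + z)` has a unique formal power
series solution `S` (without constant term) with `S ≠ z`; it is an involution,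
`S(S(z)) = z`, and its expansion begins
`S(z) = -z + (2/3)z² - (4/9)z³ + (44/135)z⁴ - (104/405)z⁵ + O(z⁶)`. -/
theorem deck_transformation_S :
    ∃ S : PowerSeries ℚ,
      (constantCoeff S = 0 ∧ S ≠ X ∧ zLogSeries S = zLogSeries X) ∧
      (∀ S' : PowerSeries ℚ,
        constantCoeff S' = 0 → S' ≠ X → zLogSeries S' = zLogSeries X → S' = S) ∧
      psComp S S = X ∧
      coeff 1 S = -1 ∧ coeff 2 S = 2 / 3 ∧ coeff 3 S = -4 / 9 ∧
      coeff 4 S = 44 / 135 ∧ coeff 5 S = -104 / 405 := by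
  have hX0 : constantCoeff (X : PowerSeries ℚ) = 0 := constantCoeff_X
  have hX1 : coeff 1 (X : PowerSeries ℚ) = 1 := coeff_one_X
  have hSne : Sdeck ≠ X := by
    intro h
    have := Sdeck_one
    rw [h, hX1] at this
    norm_num at this
  refine ⟨Sdeck, ⟨Sdeck_const, hSne, Sdeck_solves⟩, ?_, ?_, Sdeck_one, hs2, hs3, hs4, hs5⟩
  · -- uniqueness
    intro S' h0' hne' hsol'
    have hsq := sol_sq h0' hsol'
    have : (coeff 1 S' - 1) * (coeff 1 S' + 1) = 0 := by ring_nf; linear_combination hsq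
    rcases mul_eq_zero.mp this with h | h
    · exfalso
      apply hne'
      exact sol_unique h0' hX0 hsol' rfl (by rw [hX1]; linarith)
    · exact sol_unique h0' Sdeck_const hsol' Sdeck_solves (by rw [Sdeck_one]; linarith)
  · -- involution
    set T := psComp Sdeck Sdeck with hT
    have hT0 : constantCoeff T = 0 := by
      rw [← coeff_zero_eq_constantCoeff_apply, hT, psComp, coeff_mk, Finset.sum_range_one]
      simp [coeff_zero_eq_constantCoeff, Sdeck_const]
    have hT1 : coeff 1 T = 1 := by
      rw [hT, psComp, coeff_mk, Finset.sum_range_succ, Finset.sum_range_one]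
      simp [coeff_zero_eq_constantCoeff, Sdeck_const, Sdeck_one, coeff_one]
    have hTsol : zLogSeries T = zLogSeries X := by
      rw [hT, zLog_psComp Sdeck_const Sdeck_const, Sdeck_solves, psComp_zLogX,
        Sdeck_solves]
    exact sol_unique hT0 hX0 hTsol rfl (by rw [hX1, hT1])
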